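/- In the coupled transport setting, let L > 0, c₁ ≥ 0, c₂ ≥ 0, define S(C,H)(t) := ∫_0^L x² · F(C,H)(t,x) dx and the drift correction b(C,H)(t) := c₁ · a(C(t),H(t)) · S(C,H)(t) + c₂ · N(C(t),H(t)). Then (i) for every continuous C, H : [0,T] → ℝ and every t ∈ [0,T], |b(C,H)(t)| ≤ c₁·B_a·L³·exp(B_N·T)·k_{F₀} + c₂·B_N; and (ii) there exists a constant L_b > 0 such that for any two pairs (C¹,H¹), (C²,H²) of continuous functions and every t ∈ [0,T], |b(C¹,H¹)(t) − b(C²,H²)(t)| ≤ L_b · ( sup_{s∈[0,T]} |C¹(s) − C²(s)| + sup_{s∈[0,T]} |H¹(s) − H²(s)| ). -/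

import Mathlib

lemma exp_lip {M x y : ℝ} (hx : x ≤ M) (hy : y ≤ M) :
    |Real.exp x - Real.exp y| ≤ Real.exp M * |x - y| := by
  wlog h : y ≤ x generalizing x y
  · rw [abs_sub_comm, abs_sub_comm x y]
    exact this hy hx (le_of_not_ge h)
  rw [abs_of_nonneg (sub_nonneg.2 (Real.exp_le_exp.2 h)),
      abs_of_nonneg (sub_nonneg.2 h)]
  have h1 : Real.exp x * (1 + (y - x)) ≤ Real.exp y := by
    have h2 := Real.add_one_le_exp (y - x)
    calc Real.exp x * (1 + (y - x)) ≤ Real.exp x * Real.exp (y - x) := by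
          nlinarith [Real.exp_pos x]
      _ = Real.exp y := by rw [← Real.exp_add]; ring_nf
  have h3 : Real.exp x ≤ Real.exp M := Real.exp_le_exp.2 hx
  nlinarith [Real.exp_pos x]

lemma cont_of_lip {f : ℝ → ℝ → ℝ} {K : ℝ}
    (h : ∀ c₁ h₁ c₂ h₂ : ℝ, |f c₁ h₁ - f c₂ h₂| ≤ K * (|c₁ - c₂| + |h₁ - h₂|)) :
    Continuous fun p : ℝ × ℝ => f p.1 p.2 := by
  have hK : 0 ≤ K := by
    have h1 := h 1 0 0 0
    have h2 := abs_nonneg (f 1 0 - f 0 0)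
    simp at h1
    linarith
  rw [Metric.continuous_iff]
  intro p ε hε
  refine ⟨ε / (2 * K + 1), by positivity, fun q hq => ?_⟩
  have h1 : dist q.1 p.1 ≤ dist q p := by rw [Prod.dist_eq]; exact le_max_left _ _
  have h2 : dist q.2 p.2 ≤ dist q p := by rw [Prod.dist_eq]; exact le_max_right _ _
  have h3 : dist q p * (2 * K + 1) < ε := by
    rw [← lt_div_iff₀ (by positivity)]; exact hq
  have h4 := dist_nonneg (x := q) (y := p)
  rw [Real.dist_eq] at h1 h2 ⊢
  calc |f q.1 q.2 - f p.1 p.2| ≤ K * (|q.1 - p.1| + |q.2 - p.2|) := h q.1 q.2 p.1 p.2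
    _ ≤ K * (dist q p + dist q p) := by nlinarith
    _ < ε := by nlinarith



/-- boundedness and Lipschitz dependence of the drift correction
`b(C,H)(t) = c₁·a(C(t),H(t))·S(C,H)(t) + c₂·N(C(t),H(t))`. -/
theorem stmt_15 (T Ba BN La LN kF0 : ℝ) (hT : 0 < T)
    (a N : ℝ → ℝ → ℝ)
    (haB : ∀ c h : ℝ, |a c h| ≤ Ba) (hNB : ∀ c h : ℝ, |N c h| ≤ BN)
    (haL : ∀ c₁ h₁ c₂ h₂ : ℝ, |a c₁ h₁ - a c₂ h₂| ≤ La * (|c₁ - c₂| + |h₁ - h₂|))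
    (hNL : ∀ c₁ h₁ c₂ h₂ : ℝ, |N c₁ h₁ - N c₂ h₂| ≤ LN * (|c₁ - c₂| + |h₁ - h₂|))
    (F₀ : ℝ → ℝ)
    (hF0b : ∀ x : ℝ, |F₀ x| ≤ kF0)
    (hF0L : ∀ x y : ℝ, |F₀ x - F₀ y| ≤ kF0 * |x - y|)
    (F : (ℝ → ℝ) → (ℝ → ℝ) → ℝ → ℝ → ℝ)
    (hF : ∀ (C H : ℝ → ℝ) (t x : ℝ), F C H t x =
      Real.exp (∫ s in (0:ℝ)..t, N (C s) (H s)) *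
        F₀ (x - ∫ s in (0:ℝ)..t, a (C s) (H s)))
    (L c₁ c₂ : ℝ) (hL : 0 < L) (hc₁ : 0 ≤ c₁) (hc₂ : 0 ≤ c₂)
    (S : (ℝ → ℝ) → (ℝ → ℝ) → ℝ → ℝ)
    (hS : ∀ (C H : ℝ → ℝ) (t : ℝ), S C H t = ∫ x in (0:ℝ)..L, x ^ 2 * F C H t x)
    (b : (ℝ → ℝ) → (ℝ → ℝ) → ℝ → ℝ)
    (hb : ∀ (C H : ℝ → ℝ) (t : ℝ),
      b C H t = c₁ * a (C t) (H t) * S C H t + c₂ * N (C t) (H t)) :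
    (∀ C H : ℝ → ℝ, ContinuousOn C (Set.Icc 0 T) → ContinuousOn H (Set.Icc 0 T) →
      ∀ t ∈ Set.Icc (0:ℝ) T,
        |b C H t| ≤ c₁ * Ba * (L ^ 3 * Real.exp (BN * T) * kF0) + c₂ * BN) ∧
    (∃ Lb : ℝ, 0 < Lb ∧
      ∀ C₁ H₁ C₂ H₂ : ℝ → ℝ,
        ContinuousOn C₁ (Set.Icc 0 T) → ContinuousOn H₁ (Set.Icc 0 T) →
        ContinuousOn C₂ (Set.Icc 0 T) → ContinuousOn H₂ (Set.Icc 0 T) →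
        ∀ t ∈ Set.Icc (0:ℝ) T,
          |b C₁ H₁ t - b C₂ H₂ t| ≤
            Lb * (sSup ((fun s => |C₁ s - C₂ s|) '' Set.Icc (0:ℝ) T) +
                  sSup ((fun s => |H₁ s - H₂ s|) '' Set.Icc (0:ℝ) T))) := by
  have hBa : 0 ≤ Ba := le_trans (abs_nonneg _) (haB 0 0)
  have hBN : 0 ≤ BN := le_trans (abs_nonneg _) (hNB 0 0)
  have hkF0 : 0 ≤ kF0 := le_trans (abs_nonneg _) (hF0b 0)
  have hLa : 0 ≤ La := by
    have h1 := haL 1 0 0 0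
    have h2 := abs_nonneg (a 1 0 - a 0 0)
    simp at h1; linarith
  have hLN : 0 ≤ LN := by
    have h1 := hNL 1 0 0 0
    have h2 := abs_nonneg (N 1 0 - N 0 0)
    simp at h1; linarith
  set M : ℝ := Real.exp (BN * T) * kF0 with hM
  have hMnn : 0 ≤ M := by positivity
  -- bound on the N-integral
  have hI : ∀ (C H : ℝ → ℝ) (t : ℝ), t ∈ Set.Icc (0:ℝ) T →
      |∫ s in (0:ℝ)..t, N (C s) (H s)| ≤ BN * T := by
    intro C H t ht
    have key := intervalIntegral.norm_integral_le_of_norm_le_const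
      (a := (0:ℝ)) (b := t) (C := BN) (f := fun s => N (C s) (H s))
      (fun s _ => hNB (C s) (H s))
    simp only [Real.norm_eq_abs] at key
    calc |∫ s in (0:ℝ)..t, N (C s) (H s)| ≤ BN * |t - 0| := key
      _ = BN * t := by rw [sub_zero, abs_of_nonneg ht.1]
      _ ≤ BN * T := by nlinarith [ht.2]
  -- pointwise bound on F
  have hFb : ∀ (C H : ℝ → ℝ) (t : ℝ), t ∈ Set.Icc (0:ℝ) T → ∀ x : ℝ,
      |F C H t x| ≤ M := by
    intro C H t ht x
    rw [hF, abs_mul, abs_of_pos (Real.exp_pos _)]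
    have h1 : (∫ s in (0:ℝ)..t, N (C s) (H s)) ≤ BN * T :=
      le_trans (le_abs_self _) (hI C H t ht)
    exact mul_le_mul (Real.exp_le_exp.2 h1) (hF0b _) (abs_nonneg _) (Real.exp_pos _).le
  -- bound on S
  have hSb : ∀ (C H : ℝ → ℝ) (t : ℝ), t ∈ Set.Icc (0:ℝ) T →
      |S C H t| ≤ L ^ 3 * M := by
    intro C H t ht
    rw [hS]
    have key := intervalIntegral.norm_integral_le_of_norm_le_const
      (a := (0:ℝ)) (b := L) (C := L ^ 2 * M) (f := fun x => x ^ 2 * F C H t x) ?_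
    · simp only [Real.norm_eq_abs] at key
      calc |∫ x in (0:ℝ)..L, x ^ 2 * F C H t x| ≤ L ^ 2 * M * |L - 0| := key
        _ = L ^ 3 * M := by rw [sub_zero, abs_of_pos hL]; ring
    · intro x hx
      rw [Set.uIoc_of_le hL.le] at hx
      have hx2 : x ^ 2 ≤ L ^ 2 := by nlinarith [hx.1, hx.2]
      simp only [Real.norm_eq_abs]
      rw [abs_mul, abs_of_nonneg (sq_nonneg x)]
      exact mul_le_mul hx2 (hFb C H t ht x) (abs_nonneg _) (by positivity)
  constructor
  · -- Part (i)
    intro C H _ _ t ht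
    rw [hb]
    have h1 : |c₁ * a (C t) (H t) * S C H t| ≤ c₁ * Ba * (L ^ 3 * M) := by
      rw [abs_mul, abs_mul, abs_of_nonneg hc₁]
      exact mul_le_mul (mul_le_mul_of_nonneg_left (haB _ _) hc₁) (hSb C H t ht)
        (abs_nonneg _) (mul_nonneg hc₁ hBa)
    have h2 : |c₂ * N (C t) (H t)| ≤ c₂ * BN := by
      rw [abs_mul, abs_of_nonneg hc₂]
      exact mul_le_mul_of_nonneg_left (hNB _ _) hc₂
    have h3 : c₁ * Ba * (L ^ 3 * M) = c₁ * Ba * (L ^ 3 * Real.exp (BN * T) * kF0) := by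
      rw [hM]; ring
    calc |c₁ * a (C t) (H t) * S C H t + c₂ * N (C t) (H t)|
        ≤ |c₁ * a (C t) (H t) * S C H t| + |c₂ * N (C t) (H t)| := abs_add_le _ _
      _ ≤ c₁ * Ba * (L ^ 3 * Real.exp (BN * T) * kF0) + c₂ * BN := by
          rw [← h3]; linarith
  · -- Part (ii)
    set K : ℝ := Real.exp (BN * T) * kF0 * T * (LN + La) with hK
    have hKnn : 0 ≤ K := by positivity
    have hLbnn : 0 ≤ c₁ * (La * (L ^ 3 * M) + Ba * (L ^ 3 * K)) + c₂ * LN := by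
      have := mul_nonneg hLa (mul_nonneg (by positivity : (0:ℝ) ≤ L ^ 3) hMnn)
      have := mul_nonneg hBa (mul_nonneg (by positivity : (0:ℝ) ≤ L ^ 3) hKnn)
      have := mul_nonneg hc₂ hLN
      have h0 : 0 ≤ c₁ * (La * (L ^ 3 * M) + Ba * (L ^ 3 * K)) :=
        mul_nonneg hc₁ (by linarith)
      linarith
    refine ⟨c₁ * (La * (L ^ 3 * M) + Ba * (L ^ 3 * K)) + c₂ * LN + 1,
      by linarith, ?_⟩
    intro C₁ H₁ C₂ H₂ hC₁ hH₁ hC₂ hH₂ t ht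
    set dC := sSup ((fun s => |C₁ s - C₂ s|) '' Set.Icc (0:ℝ) T) with hdC
    set dH := sSup ((fun s => |H₁ s - H₂ s|) '' Set.Icc (0:ℝ) T) with hdH
    have hCle : ∀ s ∈ Set.Icc (0:ℝ) T, |C₁ s - C₂ s| ≤ dC := fun s hs =>
      le_csSup (isCompact_Icc.bddAbove_image ((hC₁.sub hC₂).abs)) ⟨s, hs, rfl⟩
    have hHle : ∀ s ∈ Set.Icc (0:ℝ) T, |H₁ s - H₂ s| ≤ dH := fun s hs =>
      le_csSup (isCompact_Icc.bddAbove_image ((hH₁.sub hH₂).abs)) ⟨s, hs, rfl⟩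
    have h0T : (0:ℝ) ∈ Set.Icc (0:ℝ) T := ⟨le_refl 0, hT.le⟩
    have hdCnn : 0 ≤ dC := le_trans (abs_nonneg _) (hCle 0 h0T)
    have hdHnn : 0 ≤ dH := le_trans (abs_nonneg _) (hHle 0 h0T)
    have hdnn : 0 ≤ dC + dH := by linarith
    -- integrability of composites
    have hsub : Set.uIcc (0:ℝ) t ⊆ Set.Icc (0:ℝ) T := Set.uIcc_subset_Icc h0T ht
    have haint : ∀ (C H : ℝ → ℝ), ContinuousOn C (Set.Icc 0 T) →
        ContinuousOn H (Set.Icc 0 T) →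
        IntervalIntegrable (fun s => a (C s) (H s)) MeasureTheory.volume 0 t := by
      intro C H hC hH
      apply ContinuousOn.intervalIntegrable
      exact ((cont_of_lip haL).comp_continuousOn (hC.prodMk hH)).mono hsub
    have hNint : ∀ (C H : ℝ → ℝ), ContinuousOn C (Set.Icc 0 T) →
        ContinuousOn H (Set.Icc 0 T) →
        IntervalIntegrable (fun s => N (C s) (H s)) MeasureTheory.volume 0 t := by
      intro C H hC hH
      apply ContinuousOn.intervalIntegrable
      exact ((cont_of_lip hNL).comp_continuousOn (hC.prodMk hH)).mono hsub
    have hsub' : Set.uIoc (0:ℝ) t ⊆ Set.Icc (0:ℝ) T := by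
      rw [Set.uIoc_of_le ht.1]
      exact fun s hs => ⟨hs.1.le, le_trans hs.2 ht.2⟩
    -- difference of integrals
    have hIdiff : |(∫ s in (0:ℝ)..t, N (C₁ s) (H₁ s)) -
        ∫ s in (0:ℝ)..t, N (C₂ s) (H₂ s)| ≤ LN * T * (dC + dH) := by
      rw [← intervalIntegral.integral_sub (hNint C₁ H₁ hC₁ hH₁) (hNint C₂ H₂ hC₂ hH₂)]
      have key := intervalIntegral.norm_integral_le_of_norm_le_const
        (a := (0:ℝ)) (b := t) (C := LN * (dC + dH))
        (f := fun s => N (C₁ s) (H₁ s) - N (C₂ s) (H₂ s)) ?_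
      · simp only [Real.norm_eq_abs] at key
        calc |∫ s in (0:ℝ)..t, (N (C₁ s) (H₁ s) - N (C₂ s) (H₂ s))|
            ≤ LN * (dC + dH) * |t - 0| := key
          _ ≤ LN * T * (dC + dH) := by
              rw [sub_zero, abs_of_nonneg ht.1]
              nlinarith [ht.2, mul_nonneg hLN hdnn]
      · intro s hs
        have hs' := hsub' hs
        simp only [Real.norm_eq_abs]
        calc |N (C₁ s) (H₁ s) - N (C₂ s) (H₂ s)|
            ≤ LN * (|C₁ s - C₂ s| + |H₁ s - H₂ s|) := hNL _ _ _ _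
          _ ≤ LN * (dC + dH) :=
              mul_le_mul_of_nonneg_left (add_le_add (hCle s hs') (hHle s hs')) hLN
    have hJdiff : |(∫ s in (0:ℝ)..t, a (C₁ s) (H₁ s)) -
        ∫ s in (0:ℝ)..t, a (C₂ s) (H₂ s)| ≤ La * T * (dC + dH) := by
      rw [← intervalIntegral.integral_sub (haint C₁ H₁ hC₁ hH₁) (haint C₂ H₂ hC₂ hH₂)]
      have key := intervalIntegral.norm_integral_le_of_norm_le_const
        (a := (0:ℝ)) (b := t) (C := La * (dC + dH))
        (f := fun s => a (C₁ s) (H₁ s) - a (C₂ s) (H₂ s)) ?_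
      · simp only [Real.norm_eq_abs] at key
        calc |∫ s in (0:ℝ)..t, (a (C₁ s) (H₁ s) - a (C₂ s) (H₂ s))|
            ≤ La * (dC + dH) * |t - 0| := key
          _ ≤ La * T * (dC + dH) := by
              rw [sub_zero, abs_of_nonneg ht.1]
              nlinarith [ht.2, mul_nonneg hLa hdnn]
      · intro s hs
        have hs' := hsub' hs
        simp only [Real.norm_eq_abs]
        calc |a (C₁ s) (H₁ s) - a (C₂ s) (H₂ s)|
            ≤ La * (|C₁ s - C₂ s| + |H₁ s - H₂ s|) := haL _ _ _ _
          _ ≤ La * (dC + dH) :=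
              mul_le_mul_of_nonneg_left (add_le_add (hCle s hs') (hHle s hs')) hLa
    -- pointwise difference of F
    have hFd : ∀ x : ℝ, |F C₁ H₁ t x - F C₂ H₂ t x| ≤ K * (dC + dH) := by
      intro x
      rw [hF, hF]
      set I₁ := ∫ s in (0:ℝ)..t, N (C₁ s) (H₁ s) with hI₁d
      set I₂ := ∫ s in (0:ℝ)..t, N (C₂ s) (H₂ s) with hI₂d
      set J₁ := ∫ s in (0:ℝ)..t, a (C₁ s) (H₁ s) with hJ₁d
      set J₂ := ∫ s in (0:ℝ)..t, a (C₂ s) (H₂ s) with hJ₂d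
      have hI₁ : I₁ ≤ BN * T := le_trans (le_abs_self _) (hI C₁ H₁ t ht)
      have hI₂ : I₂ ≤ BN * T := le_trans (le_abs_self _) (hI C₂ H₂ t ht)
      have e1 : Real.exp I₁ * F₀ (x - J₁) - Real.exp I₂ * F₀ (x - J₂)
          = (Real.exp I₁ - Real.exp I₂) * F₀ (x - J₁)
            + Real.exp I₂ * (F₀ (x - J₁) - F₀ (x - J₂)) := by ring
      rw [e1]
      have h2 : |Real.exp I₁ - Real.exp I₂| ≤ Real.exp (BN * T) * (LN * T * (dC + dH)) :=
        le_trans (exp_lip hI₁ hI₂)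
          (mul_le_mul_of_nonneg_left hIdiff (Real.exp_pos _).le)
      have h3 : |F₀ (x - J₁) - F₀ (x - J₂)| ≤ kF0 * (La * T * (dC + dH)) := by
        have h4 := hF0L (x - J₁) (x - J₂)
        have h5 : (x - J₁) - (x - J₂) = -(J₁ - J₂) := by ring
        rw [h5, abs_neg] at h4
        exact le_trans h4 (mul_le_mul_of_nonneg_left hJdiff hkF0)
      have hE2 : Real.exp I₂ ≤ Real.exp (BN * T) := Real.exp_le_exp.2 hI₂
      have hterm1 : |(Real.exp I₁ - Real.exp I₂) * F₀ (x - J₁)|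
          ≤ Real.exp (BN * T) * (LN * T * (dC + dH)) * kF0 := by
        rw [abs_mul]
        exact mul_le_mul h2 (hF0b _) (abs_nonneg _) (by positivity)
      have hterm2 : |Real.exp I₂ * (F₀ (x - J₁) - F₀ (x - J₂))|
          ≤ Real.exp (BN * T) * (kF0 * (La * T * (dC + dH))) := by
        rw [abs_mul, abs_of_pos (Real.exp_pos _)]
        exact mul_le_mul hE2 h3 (abs_nonneg _) (Real.exp_pos _).le
      have heq : Real.exp (BN * T) * (LN * T * (dC + dH)) * kF0
          + Real.exp (BN * T) * (kF0 * (La * T * (dC + dH))) = K * (dC + dH) := by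
        rw [hK]; ring
      calc |(Real.exp I₁ - Real.exp I₂) * F₀ (x - J₁)
            + Real.exp I₂ * (F₀ (x - J₁) - F₀ (x - J₂))|
          ≤ |(Real.exp I₁ - Real.exp I₂) * F₀ (x - J₁)|
            + |Real.exp I₂ * (F₀ (x - J₁) - F₀ (x - J₂))| := abs_add_le _ _
        _ ≤ K * (dC + dH) := by rw [← heq]; linarith
    -- continuity of F₀
    have hF0cont : Continuous F₀ := by
      rw [Metric.continuous_iff]
      intro p ε hε
      refine ⟨ε / (kF0 + 1), by positivity, fun q hq => ?_⟩
      have h3 : dist q p * (kF0 + 1) < ε := by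
        rw [← lt_div_iff₀ (by positivity)]; exact hq
      have h4 := dist_nonneg (x := q) (y := p)
      rw [Real.dist_eq] at h3 h4 ⊢
      calc |F₀ q - F₀ p| ≤ kF0 * |q - p| := hF0L q p
        _ < ε := by nlinarith
    -- integrability of x ↦ x² F(t,x)
    have hFint : ∀ (C H : ℝ → ℝ),
        IntervalIntegrable (fun x => x ^ 2 * F C H t x) MeasureTheory.volume 0 L := by
      intro C H
      have heq : (fun x => x ^ 2 * F C H t x)
          = fun x => x ^ 2 * (Real.exp (∫ s in (0:ℝ)..t, N (C s) (H s)) *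
              F₀ (x - ∫ s in (0:ℝ)..t, a (C s) (H s))) := funext fun x => by rw [hF]
      rw [heq]
      exact (((continuous_pow 2).mul (continuous_const.mul
        (hF0cont.comp (continuous_id.sub continuous_const)))).continuousOn).intervalIntegrable
    -- difference of S
    have hSd : |S C₁ H₁ t - S C₂ H₂ t| ≤ L ^ 3 * (K * (dC + dH)) := by
      rw [hS, hS, ← intervalIntegral.integral_sub (hFint C₁ H₁) (hFint C₂ H₂)]
      have key := intervalIntegral.norm_integral_le_of_norm_le_const
        (a := (0:ℝ)) (b := L) (C := L ^ 2 * (K * (dC + dH)))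
        (f := fun x => x ^ 2 * F C₁ H₁ t x - x ^ 2 * F C₂ H₂ t x) ?_
      · simp only [Real.norm_eq_abs] at key
        calc |∫ x in (0:ℝ)..L, (x ^ 2 * F C₁ H₁ t x - x ^ 2 * F C₂ H₂ t x)|
            ≤ L ^ 2 * (K * (dC + dH)) * |L - 0| := key
          _ = L ^ 3 * (K * (dC + dH)) := by rw [sub_zero, abs_of_pos hL]; ring
      · intro x hx
        rw [Set.uIoc_of_le hL.le] at hx
        have hx2 : x ^ 2 ≤ L ^ 2 := by nlinarith [hx.1, hx.2]
        simp only [Real.norm_eq_abs]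
        have e2 : x ^ 2 * F C₁ H₁ t x - x ^ 2 * F C₂ H₂ t x
            = x ^ 2 * (F C₁ H₁ t x - F C₂ H₂ t x) := by ring
        rw [e2, abs_mul, abs_of_nonneg (sq_nonneg x)]
        exact mul_le_mul hx2 (hFd x) (abs_nonneg _) (by positivity)
    -- final assembly
    rw [hb, hb]
    have key : c₁ * a (C₁ t) (H₁ t) * S C₁ H₁ t + c₂ * N (C₁ t) (H₁ t)
        - (c₁ * a (C₂ t) (H₂ t) * S C₂ H₂ t + c₂ * N (C₂ t) (H₂ t))
        = c₁ * ((a (C₁ t) (H₁ t) - a (C₂ t) (H₂ t)) * S C₁ H₁ t)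
          + c₁ * (a (C₂ t) (H₂ t) * (S C₁ H₁ t - S C₂ H₂ t))
          + c₂ * (N (C₁ t) (H₁ t) - N (C₂ t) (H₂ t)) := by ring
    rw [key]
    have hA : |a (C₁ t) (H₁ t) - a (C₂ t) (H₂ t)| ≤ La * (dC + dH) := by
      calc |a (C₁ t) (H₁ t) - a (C₂ t) (H₂ t)|
          ≤ La * (|C₁ t - C₂ t| + |H₁ t - H₂ t|) := haL _ _ _ _
        _ ≤ La * (dC + dH) :=
            mul_le_mul_of_nonneg_left (add_le_add (hCle t ht) (hHle t ht)) hLa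
    have hNt : |N (C₁ t) (H₁ t) - N (C₂ t) (H₂ t)| ≤ LN * (dC + dH) := by
      calc |N (C₁ t) (H₁ t) - N (C₂ t) (H₂ t)|
          ≤ LN * (|C₁ t - C₂ t| + |H₁ t - H₂ t|) := hNL _ _ _ _
        _ ≤ LN * (dC + dH) :=
            mul_le_mul_of_nonneg_left (add_le_add (hCle t ht) (hHle t ht)) hLN
    have ht1 : |c₁ * ((a (C₁ t) (H₁ t) - a (C₂ t) (H₂ t)) * S C₁ H₁ t)|
        ≤ c₁ * (La * (dC + dH) * (L ^ 3 * M)) := by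
      rw [abs_mul, abs_of_nonneg hc₁, abs_mul]
      exact mul_le_mul_of_nonneg_left
        (mul_le_mul hA (hSb C₁ H₁ t ht) (abs_nonneg _) (mul_nonneg hLa hdnn)) hc₁
    have ht2 : |c₁ * (a (C₂ t) (H₂ t) * (S C₁ H₁ t - S C₂ H₂ t))|
        ≤ c₁ * (Ba * (L ^ 3 * (K * (dC + dH)))) := by
      rw [abs_mul, abs_of_nonneg hc₁, abs_mul]
      exact mul_le_mul_of_nonneg_left
        (mul_le_mul (haB _ _) hSd (abs_nonneg _) hBa) hc₁
    have ht3 : |c₂ * (N (C₁ t) (H₁ t) - N (C₂ t) (H₂ t))| ≤ c₂ * (LN * (dC + dH)) := by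
      rw [abs_mul, abs_of_nonneg hc₂]
      exact mul_le_mul_of_nonneg_left hNt hc₂
    calc |c₁ * ((a (C₁ t) (H₁ t) - a (C₂ t) (H₂ t)) * S C₁ H₁ t)
          + c₁ * (a (C₂ t) (H₂ t) * (S C₁ H₁ t - S C₂ H₂ t))
          + c₂ * (N (C₁ t) (H₁ t) - N (C₂ t) (H₂ t))|
        ≤ |c₁ * ((a (C₁ t) (H₁ t) - a (C₂ t) (H₂ t)) * S C₁ H₁ t)|
          + |c₁ * (a (C₂ t) (H₂ t) * (S C₁ H₁ t - S C₂ H₂ t))|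
          + |c₂ * (N (C₁ t) (H₁ t) - N (C₂ t) (H₂ t))| := abs_add_three _ _ _
      _ ≤ (c₁ * (La * (L ^ 3 * M) + Ba * (L ^ 3 * K)) + c₂ * LN + 1) * (dC + dH) := by
          have hfin : c₁ * (La * (dC + dH) * (L ^ 3 * M))
              + c₁ * (Ba * (L ^ 3 * (K * (dC + dH)))) + c₂ * (LN * (dC + dH))
              = (c₁ * (La * (L ^ 3 * M) + Ba * (L ^ 3 * K)) + c₂ * LN) * (dC + dH) := by
            ring
          have hmono : (c₁ * (La * (L ^ 3 * M) + Ba * (L ^ 3 * K)) + c₂ * LN) * (dC + dH)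
              ≤ (c₁ * (La * (L ^ 3 * M) + Ba * (L ^ 3 * K)) + c₂ * LN + 1) * (dC + dH) :=
            mul_le_mul_of_nonneg_right (by linarith) hdnn
          linarith
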